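/- Let x, y ∈ ℝ with x ≠ 0 and y ≠ 0. Then the cubic polynomial P(α) = α³ + 2x²α² + (x² − y²)α − x²y² has exactly one nonnegative real root, which is moreover strictly positive. -/
import Mathlib

theorem cubic_unique_nonneg_root (x y : ℝ) (hx : x ≠ 0) (hy : y ≠ 0) :
    (∃! α : ℝ, 0 ≤ α ∧
      α ^ 3 + 2 * x ^ 2 * α ^ 2 + (x ^ 2 - y ^ 2) * α - x ^ 2 * y ^ 2 = 0) ∧
    (∀ α : ℝ, 0 ≤ α →
      α ^ 3 + 2 * x ^ 2 * α ^ 2 + (x ^ 2 - y ^ 2) * α - x ^ 2 * y ^ 2 = 0 → 0 < α) := by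
  have hx2 : 0 < x ^ 2 := by positivity
  have hy2 : 0 < y ^ 2 := by positivity
  -- any nonneg root is positive
  have hpos : ∀ α : ℝ, 0 ≤ α →
      α ^ 3 + 2 * x ^ 2 * α ^ 2 + (x ^ 2 - y ^ 2) * α - x ^ 2 * y ^ 2 = 0 → 0 < α := by
    intro α hα heq
    rcases hα.lt_or_eq with h | h
    · exact h
    · exfalso
      rw [← h] at heq
      nlinarith
  -- uniqueness
  have huniq : ∀ a b : ℝ, 0 ≤ a →
      a ^ 3 + 2 * x ^ 2 * a ^ 2 + (x ^ 2 - y ^ 2) * a - x ^ 2 * y ^ 2 = 0 →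
      0 ≤ b →
      b ^ 3 + 2 * x ^ 2 * b ^ 2 + (x ^ 2 - y ^ 2) * b - x ^ 2 * y ^ 2 = 0 →
      a = b := by
    have key : ∀ a b : ℝ, 0 < a → 0 < b → a < b →
        a ^ 3 + 2 * x ^ 2 * a ^ 2 + (x ^ 2 - y ^ 2) * a - x ^ 2 * y ^ 2 = 0 →
        b ^ 3 + 2 * x ^ 2 * b ^ 2 + (x ^ 2 - y ^ 2) * b - x ^ 2 * y ^ 2 = 0 → False := by
      intro a b ha hb hab ea eb
      have hbr : 0 < a * b * (a + b + 2 * x ^ 2)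
          + x ^ 2 * (a ^ 2 + a * b + b ^ 2 + 2 * x ^ 2 * (a + b) + x ^ 2) := by positivity
      have h2 : (b - a) * (a * b * (a + b + 2 * x ^ 2)
          + x ^ 2 * (a ^ 2 + a * b + b ^ 2 + 2 * x ^ 2 * (a + b) + x ^ 2))
          = (b ^ 3 + 2 * x ^ 2 * b ^ 2 + (x ^ 2 - y ^ 2) * b - x ^ 2 * y ^ 2) * (a + x ^ 2)
            - (a ^ 3 + 2 * x ^ 2 * a ^ 2 + (x ^ 2 - y ^ 2) * a - x ^ 2 * y ^ 2) * (b + x ^ 2) := by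
        ring
      rw [ea, eb] at h2
      nlinarith [mul_pos (sub_pos.mpr hab) hbr]
    intro a b ha ea hb eb
    have ha' := hpos a ha ea
    have hb' := hpos b hb eb
    rcases lt_trichotomy a b with h | h | h
    · exact absurd (key a b ha' hb' h ea eb) (by simp)
    · exact h
    · exact absurd (key b a hb' ha' h eb ea) (by simp)
  -- existence via IVT
  set f : ℝ → ℝ := fun α => α ^ 3 + 2 * x ^ 2 * α ^ 2 + (x ^ 2 - y ^ 2) * α - x ^ 2 * y ^ 2 with hf
  have hc : Continuous f := by fun_prop
  set b : ℝ := 1 + 2 * x ^ 2 + y ^ 2 + x ^ 2 * y ^ 2 with hbdef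
  have hb0 : (0:ℝ) ≤ b := by positivity
  have hfb : 0 ≤ f b := by
    simp only [hf, hbdef]
    nlinarith [sq_nonneg x, sq_nonneg y, sq_nonneg (x*y), mul_pos hx2 hy2]
  have hf0 : f 0 ≤ 0 := by
    simp only [hf]
    nlinarith
  have := intermediate_value_Icc hb0 hc.continuousOn
  have hmem : (0:ℝ) ∈ Set.Icc (f 0) (f b) := Set.mem_Icc.mpr ⟨hf0, hfb⟩
  obtain ⟨α, hαmem, hαroot⟩ := this hmem
  refine ⟨⟨α, ⟨hαmem.1, hαroot⟩, ?_⟩, hpos⟩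
  intro β hβ
  exact huniq β α hβ.1 hβ.2 hαmem.1 hαroot
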